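/- There exists a constant M such that for all d ≥ 1 and all β with sin(dβ) ≠ 0, the Lebesgue constant of the modified Chebyshev points 𝒯_d^{(β)} on [−1,1] satisfies Δ(𝒯_d^{(β)}) ≤ M log(d+1) / |sin dβ|. -/

import Mathlib

open Real Finset

/-- The modified Chebyshev points of degree `d` with parameter `β`. -/
noncomputable def modCheb (d : ℕ) (β : ℝ) : Finset ℝ :=
  (Finset.range d).image (fun j : ℕ => Real.cos (β + 2 * j * π / d))

/-- The fundamental Lagrange interpolation polynomial (as a function) at node `a`. -/
noncomputable def lagBasis (A : Finset ℝ) (a : ℝ) (x : ℝ) : ℝ :=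
  ∏ b ∈ A.erase a, (x - b) / (a - b)

/-- The Lebesgue constant of the node set `A` with respect to `[-1,1]`. -/
noncomputable def leb (A : Finset ℝ) : ℝ :=
  ⨆ x ∈ Set.Icc (-1 : ℝ) 1, ∑ a ∈ A, |lagBasis A a x|

lemma abs_sin_nat_mul_le (n : ℕ) (x : ℝ) : |Real.sin (n * x)| ≤ n * |Real.sin x| := by
  induction n with
  | zero => simp
  | succ n ih =>
    have h : ((n:ℝ)+1) * x = n*x + x := by ring
    rw [Nat.cast_succ, h, Real.sin_add]
    calc |Real.sin (n*x) * Real.cos x + Real.cos (n*x) * Real.sin x|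
        ≤ |Real.sin (n*x) * Real.cos x| + |Real.cos (n*x) * Real.sin x| := abs_add_le _ _
      _ ≤ |Real.sin (n*x)| * 1 + 1 * |Real.sin x| := by
          rw [abs_mul, abs_mul]
          gcongr <;> [exact Real.abs_cos_le_one x; exact Real.abs_cos_le_one _]
      _ ≤ n * |Real.sin x| + 1 * |Real.sin x| := by rw [mul_one]; gcongr
      _ = ((n:ℝ)+1) * |Real.sin x| := by ring

lemma abs_sin_add_int_mul_pi (x : ℝ) (q : ℤ) : |Real.sin (x + q * π)| = |Real.sin x| := by
  rw [Real.sin_add, Real.sin_int_mul_pi, mul_zero, add_zero, abs_mul]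
  have h1 : |Real.cos (q*π)| = 1 := by
    have h := Real.sin_sq_add_cos_sq ((q:ℝ)*π)
    rw [Real.sin_int_mul_pi] at h
    nlinarith [abs_nonneg (Real.cos ((q:ℝ)*π)), sq_abs (Real.cos ((q:ℝ)*π))]
  rw [h1, mul_one]

lemma sin_lower (g : ℝ) (h0 : 0 ≤ g) (h1 : g ≤ π) : 2/π * min g (π - g) ≤ Real.sin g := by
  have hπ := Real.pi_pos
  have hc : (0:ℝ) ≤ 2/π := by positivity
  rcases le_or_gt g (π/2) with h | h
  · have h3 := Real.mul_le_sin h0 h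
    have h4 := mul_le_mul_of_nonneg_left (min_le_left g (π - g)) hc
    linarith
  · have h0' : 0 ≤ π - g := by linarith
    have h1' : π - g ≤ π/2 := by linarith
    have h3 := Real.mul_le_sin h0' h1'
    rw [Real.sin_pi_sub] at h3
    have h4 := mul_le_mul_of_nonneg_left (min_le_right g (π - g)) hc
    linarith

lemma pointBound (d : ℕ) (hd : 1 ≤ d) (x f : ℝ) (m : ℕ) (hf0 : 0 ≤ f) (hf1 : f < 1)
    (hmd : m < d) (hx : ∃ q : ℤ, x = π/d * (f + m) + q * π) :
    |Real.sin (d * x)| / |Real.sin x| ≤ (d:ℝ) / ((max 1 (min m (d - 1 - m)) : ℕ) : ℝ) := by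
  have hπ := Real.pi_pos
  have hd0 : (0:ℝ) < d := by exact_mod_cast hd
  obtain ⟨q, hq⟩ := hx
  set g : ℝ := π/d * (f + m) with hg
  have hg0 : 0 ≤ g := by positivity
  have hgπ : g ≤ π := by
    have h1 : f + (m:ℝ) ≤ d := by
      have : (m:ℝ) ≤ (d:ℝ) - 1 := by
        have : (m:ℝ) + 1 ≤ d := by exact_mod_cast hmd
        linarith
      linarith
    calc g = π/d * (f + m) := rfl
      _ ≤ π/d * d := mul_le_mul_of_nonneg_left h1 (by positivity)
      _ = π := by field_simp
  have habs : |Real.sin x| = Real.sin g := by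
    rw [hq, abs_sin_add_int_mul_pi g q]
    exact abs_of_nonneg (Real.sin_nonneg_of_nonneg_of_le_pi hg0 hgπ)
  have hmcast : ((d - 1 - m : ℕ) : ℝ) = (d:ℝ) - 1 - m := by
    have h1 : m ≤ d - 1 := by omega
    have h2 : 1 ≤ d := hd
    push_cast [Nat.cast_sub h1, Nat.cast_sub h2]
    ring
  have hglow : 2/(d:ℝ) * ((min m (d-1-m) : ℕ) : ℝ) ≤ Real.sin g := by
    have hlow := sin_lower g hg0 hgπ
    have hmin : (π/d) * ((min m (d-1-m) : ℕ) : ℝ) ≤ min g (π - g) := by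
      rw [Nat.cast_min, hmcast, le_min_iff]
      constructor
      · calc (π/d) * min (m:ℝ) ((d:ℝ)-1-m) ≤ (π/d) * m :=
              mul_le_mul_of_nonneg_left (min_le_left _ _) (by positivity)
          _ ≤ g := by rw [hg]; exact mul_le_mul_of_nonneg_left (by linarith) (by positivity)
      · have hpg : π - g = (π/d) * ((d:ℝ) - f - m) := by
          rw [hg]; field_simp; ring
        calc (π/d) * min (m:ℝ) ((d:ℝ)-1-m) ≤ (π/d) * ((d:ℝ)-1-m) :=
              mul_le_mul_of_nonneg_left (min_le_right _ _) (by positivity)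
          _ ≤ π - g := by rw [hpg]; exact mul_le_mul_of_nonneg_left (by linarith) (by positivity)
    calc 2/(d:ℝ) * ((min m (d-1-m) : ℕ) : ℝ) = (2/π) * ((π/d) * ((min m (d-1-m) : ℕ) : ℝ)) := by
          field_simp
      _ ≤ (2/π) * min g (π - g) := mul_le_mul_of_nonneg_left hmin (by positivity)
      _ ≤ Real.sin g := hlow
  rcases Nat.eq_zero_or_pos (min m (d-1-m)) with h0 | hpos
  · rw [h0]
    norm_num
    by_cases hsx : |Real.sin x| = 0
    · rw [hsx, div_zero]; positivity
    · have hsxpos : 0 < |Real.sin x| := lt_of_le_of_ne (abs_nonneg _) (Ne.symm hsx)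
      rw [div_le_iff₀ hsxpos]
      exact abs_sin_nat_mul_le d x
  · have hμ1 : (1:ℝ) ≤ ((min m (d-1-m) : ℕ) : ℝ) := by exact_mod_cast hpos
    have hμpos : (0:ℝ) < ((min m (d-1-m) : ℕ) : ℝ) := by linarith
    have hmax : max 1 (min m (d-1-m)) = min m (d-1-m) := max_eq_right hpos
    rw [hmax]
    have hgpos : 0 < Real.sin g := lt_of_lt_of_le (by positivity) hglow
    rw [habs]
    calc |Real.sin (d*x)| / Real.sin g
        ≤ 1 / (2/(d:ℝ) * ((min m (d-1-m) : ℕ) : ℝ)) :=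
          div_le_div₀ zero_le_one (Real.abs_sin_le_one _) (by positivity) hglow
      _ = (d:ℝ) / (2 * ((min m (d-1-m) : ℕ) : ℝ)) := by field_simp
      _ ≤ (d:ℝ) / ((min m (d-1-m) : ℕ) : ℝ) := by gcongr; linarith

lemma harmonic_sum_bound (d : ℕ) (hd : 1 ≤ d) :
    ∑ m ∈ Finset.range d, (1:ℝ) / ((max 1 m : ℕ) : ℝ) ≤ 2 + Real.log (d + 1) := by
  obtain ⟨e, rfl⟩ : ∃ e, d = e + 1 := ⟨d - 1, by omega⟩
  rw [Finset.sum_range_succ']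
  have h1 : ∀ m : ℕ, ((max 1 (m+1) : ℕ) : ℝ) = ((m:ℝ) + 1) := by
    intro m; have : max 1 (m+1) = m+1 := by omega
    rw [this]; push_cast; ring
  have h2 : ∑ m ∈ Finset.range e, (1:ℝ) / ((max 1 (m+1) : ℕ) : ℝ)
      = ∑ m ∈ Finset.range e, (1:ℝ) / ((m:ℝ) + 1) := by
    refine Finset.sum_congr rfl fun m _ => by rw [h1]
  have h3 : ∑ m ∈ Finset.range e, (1:ℝ) / ((m:ℝ) + 1) = (harmonic e : ℝ) := by
    rw [harmonic]
    push_cast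
    refine Finset.sum_congr rfl fun m _ => by rw [one_div]
  have h4 : (harmonic e : ℝ) ≤ 1 + Real.log e := harmonic_le_one_add_log e
  have h5 : Real.log e ≤ Real.log ((e:ℝ) + 1 + 1) := by
    rcases Nat.eq_zero_or_pos e with he | he
    · subst he; simp
      positivity
    · apply Real.log_le_log (by exact_mod_cast he)
      push_cast; linarith
  have h6 : ((max 1 0 : ℕ) : ℝ) = 1 := by norm_num
  rw [h2, h3, h6]
  push_cast
  push_cast at h5
  linarith

lemma sumB (d : ℕ) (hd : 1 ≤ d) (c : ℝ) :
    ∑ k ∈ Finset.range d, |Real.sin (d * c)| / |Real.sin (c + k * π / d)| ≤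
      8 * d * Real.log (d + 1) := by
  have hπ := Real.pi_pos
  have hd0 : (0:ℝ) < d := by exact_mod_cast hd
  have hdz : (d:ℤ) ≠ 0 := by exact_mod_cast Nat.pos_iff_ne_zero.mp hd
  have hdpos : (0:ℤ) < d := by exact_mod_cast hd
  set n : ℤ := ⌊d * c / π⌋ with hn
  set f : ℝ := Int.fract (d * c / π) with hf
  have hf0 : 0 ≤ f := Int.fract_nonneg _
  have hf1 : f < 1 := Int.fract_lt_one _
  have hnf : (n:ℝ) + f = d * c / π := by rw [hf, hn]; exact Int.floor_add_fract _
  have hc : c = π / d * ((n:ℝ) + f) := by rw [hnf]; field_simp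
  -- the index map
  set M : ℕ → ℕ := fun k => ((n + k) % (d:ℤ)).toNat with hM
  have hMlt : ∀ k, M k < d := by
    intro k
    have h1 : (n + k) % (d:ℤ) < d := Int.emod_lt_of_pos _ hdpos
    have h2 : 0 ≤ (n + k) % (d:ℤ) := Int.emod_nonneg _ hdz
    simp only [hM]
    omega
  have hMcast : ∀ k, ((M k : ℤ)) = (n + k) % (d:ℤ) := by
    intro k
    have h2 : 0 ≤ (n + k) % (d:ℤ) := Int.emod_nonneg _ hdz
    simp [hM, Int.toNat_of_nonneg h2]
  -- step 1: termwise bound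
  have step1 : ∀ k ∈ Finset.range d,
      |Real.sin (d * c)| / |Real.sin (c + k * π / d)| ≤
        (d:ℝ) / ((max 1 (min (M k) (d - 1 - M k)) : ℕ) : ℝ) := by
    intro k hk
    set x : ℝ := c + k * π / d with hx
    have hdx : (d:ℝ) * x = d * c + (k:ℤ) * π := by
      rw [hx]; push_cast; field_simp
    have hnum : |Real.sin (d * c)| = |Real.sin ((d:ℝ) * x)| := by
      rw [hdx, abs_sin_add_int_mul_pi]
    rw [hnum]
    apply pointBound d hd x f (M k) hf0 hf1 (hMlt k)
    -- x = π/d * (f + M k) + q * π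
    refine ⟨(n + k) / (d:ℤ), ?_⟩
    have hkey : (n:ℤ) + k = (M k) + d * ((n + k) / (d:ℤ)) := by
      rw [hMcast k]; rw [Int.emod_add_mul_ediv (n + k) d]
    have hxw : x = π / d * (f + ((n:ℝ) + k)) := by
      rw [hx]
      conv_lhs => rw [hc]
      field_simp
      ring
    rw [hxw]
    have hcast : ((n:ℝ) + k) = (M k : ℝ) + d * (((n + k) / (d:ℤ) : ℤ) : ℝ) := by
      exact_mod_cast congrArg (fun z : ℤ => (z : ℝ)) hkey
    rw [hcast]
    field_simp
    ring
  -- step 2: reindex the RHS sum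
  have step2 : ∑ k ∈ Finset.range d, (d:ℝ) / ((max 1 (min (M k) (d - 1 - M k)) : ℕ) : ℝ)
      = ∑ m ∈ Finset.range d, (d:ℝ) / ((max 1 (min m (d - 1 - m)) : ℕ) : ℝ) := by
    apply Finset.sum_nbij' (i := fun k => M k) (j := fun m => ((m - n) % (d:ℤ)).toNat)
    · intro k hk; exact Finset.mem_range.mpr (hMlt k)
    · intro m hm
      have h1 : (m - n) % (d:ℤ) < d := Int.emod_lt_of_pos _ hdpos
      have h2 : 0 ≤ (m - n) % (d:ℤ) := Int.emod_nonneg _ hdz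
      refine Finset.mem_range.mpr ?_; omega
    · intro k hk
      have hk' : (k:ℤ) < d := by exact_mod_cast Finset.mem_range.mp hk
      have : ((M k : ℤ) - n) % (d:ℤ) = (k:ℤ) := by
        rw [hMcast k]
        conv_lhs => rw [Int.sub_emod, Int.emod_emod_of_dvd _ dvd_rfl, ← Int.sub_emod]
        have : (n + (k:ℤ) - n) = (k:ℤ) := by ring
        rw [this, Int.emod_eq_of_lt (by positivity) hk']
      omega
    · intro m hm
      have hm' : (m:ℤ) < d := by exact_mod_cast Finset.mem_range.mp hm
      have h2 : 0 ≤ (m - n) % (d:ℤ) := Int.emod_nonneg _ hdz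
      have h3 : (n + ((((m:ℤ) - n) % (d:ℤ)).toNat : ℤ)) % (d:ℤ) = (m:ℤ) := by
        rw [Int.toNat_of_nonneg h2]
        conv_lhs => rw [Int.add_emod, Int.emod_emod_of_dvd _ dvd_rfl, ← Int.add_emod]
        have h4 : (n + ((m:ℤ) - n)) = (m:ℤ) := by ring
        rw [h4, Int.emod_eq_of_lt (by positivity) hm']
      have h5 : ((M ((((m:ℤ) - n) % (d:ℤ)).toNat) : ℤ)) = (m:ℤ) := by
        rw [hMcast]; exact h3
      omega
    · intro k hk; rfl
  -- step 3: bound the model sum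
  have step3 : ∑ m ∈ Finset.range d, (d:ℝ) / ((max 1 (min m (d - 1 - m)) : ℕ) : ℝ)
      ≤ 8 * d * Real.log (d + 1) := by
    have hterm : ∀ m ∈ Finset.range d,
        (d:ℝ) / ((max 1 (min m (d - 1 - m)) : ℕ) : ℝ) ≤
          (d:ℝ) * ((1:ℝ) / ((max 1 m : ℕ) : ℝ) + (1:ℝ) / ((max 1 (d - 1 - m) : ℕ) : ℝ)) := by
      intro m _
      rcases le_total m (d - 1 - m) with h | h
      · have hmin : min m (d-1-m) = m := min_eq_left h
        rw [hmin, mul_add, div_eq_mul_one_div (d:ℝ)]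
        have h1 : (0:ℝ) ≤ (d:ℝ) * ((1:ℝ) / ((max 1 (d-1-m) : ℕ) : ℝ)) := by positivity
        linarith
      · have hmin : min m (d-1-m) = d-1-m := min_eq_right h
        rw [hmin, mul_add, div_eq_mul_one_div (d:ℝ)]
        have h1 : (0:ℝ) ≤ (d:ℝ) * ((1:ℝ) / ((max 1 m : ℕ) : ℝ)) := by positivity
        linarith
    calc ∑ m ∈ Finset.range d, (d:ℝ) / ((max 1 (min m (d - 1 - m)) : ℕ) : ℝ)
        ≤ ∑ m ∈ Finset.range d, (d:ℝ) * ((1:ℝ) / ((max 1 m : ℕ) : ℝ) + (1:ℝ) / ((max 1 (d-1-m) : ℕ) : ℝ)) :=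
          Finset.sum_le_sum hterm
      _ = (d:ℝ) * ((∑ m ∈ Finset.range d, (1:ℝ) / ((max 1 m : ℕ) : ℝ))
            + ∑ m ∈ Finset.range d, (1:ℝ) / ((max 1 (d-1-m) : ℕ) : ℝ)) := by
          rw [← Finset.sum_add_distrib, Finset.mul_sum]
      _ = (d:ℝ) * ((∑ m ∈ Finset.range d, (1:ℝ) / ((max 1 m : ℕ) : ℝ))
            + ∑ m ∈ Finset.range d, (1:ℝ) / ((max 1 m : ℕ) : ℝ)) := by
          rw [Finset.sum_range_reflect (fun m => (1:ℝ) / ((max 1 m : ℕ) : ℝ)) d]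
      _ = 2 * (d:ℝ) * (∑ m ∈ Finset.range d, (1:ℝ) / ((max 1 m : ℕ) : ℝ)) := by ring
      _ ≤ 2 * (d:ℝ) * (2 + Real.log (d + 1)) := by
          gcongr
          exact harmonic_sum_bound d hd
      _ ≤ 8 * d * Real.log (d + 1) := by
          have hlog : Real.log 2 ≤ Real.log ((d:ℝ) + 1) := by
            apply Real.log_le_log (by norm_num)
            have : (1:ℝ) ≤ d := by exact_mod_cast hd
            linarith
          have h2 : (0.6931471803 : ℝ) < Real.log 2 := Real.log_two_gt_d9
          nlinarith
  calc ∑ k ∈ Finset.range d, |Real.sin (d * c)| / |Real.sin (c + k * π / d)|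
      ≤ ∑ k ∈ Finset.range d, (d:ℝ) / ((max 1 (min (M k) (d - 1 - M k)) : ℕ) : ℝ) :=
        Finset.sum_le_sum step1
    _ = _ := step2
    _ ≤ _ := step3

open Polynomial in
lemma derivative_finset_prod (s : Finset ℕ) (f : ℕ → ℂ[X]) :
    derivative (∏ b ∈ s, f b) = ∑ b ∈ s, (∏ a ∈ s.erase b, f a) * derivative (f b) := by
  classical
  induction s using Finset.induction_on with
  | empty => simp
  | @insert a s ha ih =>
    rw [Finset.prod_insert ha, derivative_mul, Finset.sum_insert ha, ih]
    rw [Finset.erase_insert ha, Finset.mul_sum]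
    have h1 : ∀ b ∈ s, (∏ x ∈ (insert a s).erase b, f x) * derivative (f b)
        = f a * ((∏ x ∈ s.erase b, f x) * derivative (f b)) := by
      intro b hb
      have hab : a ≠ b := fun h => ha (h ▸ hb)
      rw [Finset.erase_insert_of_ne hab, Finset.prod_insert
        (fun h => ha (Finset.mem_of_mem_erase h)), mul_assoc]
    rw [Finset.sum_congr rfl h1]
    ring

lemma cos_as_exp (x : ℝ) :
    ((Real.cos x : ℝ) : ℂ) = (Complex.exp (x * Complex.I) + (Complex.exp (x * Complex.I))⁻¹) / 2 := by
  rw [Complex.ofReal_cos, Complex.cos, ← Complex.exp_neg]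
  ring_nf

lemma sin_as_exp (x : ℝ) :
    Complex.exp (x * Complex.I) - (Complex.exp (x * Complex.I))⁻¹
      = 2 * Complex.I * ((Real.sin x : ℝ) : ℂ) := by
  rw [Complex.ofReal_sin, Complex.sin, ← Complex.exp_neg]
  have hI := Complex.I_ne_zero
  field_simp
  ring_nf
  rw [Complex.I_sq]
  ring

lemma factor_ident (z v : ℂ) (hz : z ≠ 0) (hv : v ≠ 0) :
    (z + z⁻¹) / 2 - (v + v⁻¹) / 2 = (z - v) * (z * v - 1) / (2 * z * v) := by
  field_simp
  ring

lemma prod_linear (d : ℕ) (hd : 1 ≤ d) (ζ α : ℂ) (hζ : IsPrimitiveRoot ζ d) (y : ℂ) :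
    ∏ j ∈ Finset.range d, (y - ζ ^ j * α) = y ^ d - α ^ d := by
  have h := X_pow_sub_C_eq_prod hζ (by omega : 0 < d) (rfl : α ^ d = α ^ d)
  have h2 := congrArg (Polynomial.eval y) h
  simpa [Polynomial.eval_prod] using h2.symm

open Polynomial in
lemma prod_linear_erase (d : ℕ) (hd : 1 ≤ d) (ζ α : ℂ) (hζ : IsPrimitiveRoot ζ d) (k : ℕ)
    (hk : k < d) :
    ∏ j ∈ (Finset.range d).erase k, (ζ ^ k * α - ζ ^ j * α) = d * (ζ ^ k * α) ^ (d - 1) := by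
  have h := X_pow_sub_C_eq_prod hζ (by omega : 0 < d) (rfl : α ^ d = α ^ d)
  have hder := congrArg Polynomial.derivative h
  rw [Polynomial.derivative_sub, Polynomial.derivative_X_pow, Polynomial.derivative_C,
    derivative_finset_prod] at hder
  have hev := congrArg (Polynomial.eval (ζ ^ k * α)) hder
  simp only [Polynomial.eval_sub, Polynomial.eval_zero, sub_zero, Polynomial.eval_finset_sum,
    Polynomial.eval_mul, Polynomial.eval_prod, Polynomial.eval_sub, Polynomial.eval_X,
    Polynomial.eval_C, Polynomial.eval_pow, Polynomial.eval_mul, Polynomial.eval_natCast,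
    Polynomial.derivative_sub, Polynomial.derivative_X, Polynomial.derivative_C, sub_zero,
    Polynomial.derivative_one, Polynomial.eval_one] at hev
  rw [Finset.sum_eq_single k] at hev
  · rw [mul_one] at hev
    exact hev.symm
  · intro b hb hbk
    apply mul_eq_zero_of_left
    apply Finset.prod_eq_zero (Finset.mem_erase.mpr ⟨Ne.symm hbk, Finset.mem_range.mpr hk⟩)
    simp
  · intro hk'; exact absurd (Finset.mem_range.mpr hk) hk'

lemma sin_theta_ne (d : ℕ) (β : ℝ) (hd : 1 ≤ d) (hs : Real.sin ((d:ℝ)*β) ≠ 0) (k : ℕ) :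
    Real.sin (β + 2*(k:ℝ)*π/d) ≠ 0 := by
  intro h
  obtain ⟨m, hm⟩ := Real.sin_eq_zero_iff.mp h
  apply hs
  have hd0 : (d:ℝ) ≠ 0 := by
    have : (0:ℝ) < d := by exact_mod_cast hd
    linarith
  have h2 := congrArg (fun t : ℝ => (d:ℝ) * t) hm
  have h3 : (d:ℝ) * (β + 2*(k:ℝ)*π/d) = d*β + 2*k*π := by field_simp
  rw [h3] at h2
  have h4 : (d:ℝ)*β = ((d*m - 2*k : ℤ) : ℝ) * π := by push_cast; linarith
  rw [h4, Real.sin_int_mul_pi]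

noncomputable def wj (d : ℕ) (β : ℝ) (j : ℕ) : ℂ :=
  Complex.exp (((β + 2 * (j:ℝ) * π / d : ℝ) : ℂ) * Complex.I)

section Main
variable (d : ℕ) (β : ℝ)

lemma wj_eq (hd : 1 ≤ d) (j : ℕ) :
    wj d β j = Complex.exp (2*π*Complex.I/d) ^ j * Complex.exp ((β:ℝ) * Complex.I) := by
  have hd0 : (d:ℂ) ≠ 0 := by exact_mod_cast (by positivity : (d:ℝ) ≠ 0)
  rw [wj, ← Complex.exp_nat_mul, ← Complex.exp_add]
  congr 1
  push_cast
  field_simp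
  ring

lemma wj_ne (j : ℕ) : wj d β j ≠ 0 := Complex.exp_ne_zero _

lemma wj_pow_d (hd : 1 ≤ d) (j : ℕ) :
    (wj d β j) ^ d = Complex.exp (((d:ℝ)*β : ℝ) * Complex.I) := by
  have hd0 : (d:ℂ) ≠ 0 := by exact_mod_cast (by positivity : (d:ℝ) ≠ 0)
  rw [wj, ← Complex.exp_nat_mul]
  have hexp : (d:ℂ) * (((β + 2*(j:ℝ)*π/d : ℝ):ℂ) * Complex.I)
      = (((d:ℝ)*β : ℝ):ℂ) * Complex.I + ((j:ℤ):ℂ) * (2*(π:ℂ)*Complex.I) := by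
    push_cast
    field_simp
  rw [hexp, Complex.exp_add, Complex.exp_int_mul_two_pi_mul_I, mul_one]

-- C1
lemma prod_cos_eval (hd : 1 ≤ d) (φ : ℝ) :
    ∏ j ∈ Finset.range d, (Real.cos φ - Real.cos (β + 2*(j:ℝ)*π/d))
      = (Real.cos ((d:ℝ)*φ) - Real.cos ((d:ℝ)*β)) / 2^(d-1) := by
  have hd0 : d ≠ 0 := by omega
  have hω : IsPrimitiveRoot (Complex.exp (2*π*Complex.I/d)) d :=
    Complex.isPrimitiveRoot_exp d hd0
  set ω : ℂ := Complex.exp (2*π*Complex.I/d) with hωdef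
  set a : ℂ := Complex.exp ((β:ℝ) * Complex.I) with hadef
  set z : ℂ := Complex.exp ((φ:ℝ) * Complex.I) with hzdef
  have hzne : z ≠ 0 := Complex.exp_ne_zero _
  have hane : a ≠ 0 := Complex.exp_ne_zero _
  have hωne : ω ≠ 0 := Complex.exp_ne_zero _
  -- cast to ℂ
  apply Complex.ofReal_injective
  rw [Complex.ofReal_prod, Complex.ofReal_div, Complex.ofReal_sub, Complex.ofReal_pow]
  simp only [Complex.ofReal_sub]
  -- rewrite each factor
  have hwj : ∀ j : ℕ, Complex.exp (((β + 2*(j:ℝ)*π/d : ℝ):ℂ) * Complex.I) = ω^j*a := by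
    intro j
    have h := wj_eq d β hd j
    rw [wj] at h
    exact h
  have hfac : ∀ j ∈ Finset.range d,
      ((Real.cos φ : ℝ):ℂ) - ((Real.cos (β + 2*(j:ℝ)*π/d) : ℝ):ℂ)
        = (z - ω^j*a) * (z * (ω^j*a) - 1) / (2 * z * (ω^j*a)) := by
    intro j _
    rw [cos_as_exp, cos_as_exp, hwj j]
    exact factor_ident z (ω^j*a) hzne (mul_ne_zero (pow_ne_zero _ hωne) hane)
  rw [Finset.prod_congr rfl hfac]
  rw [Finset.prod_div_distrib, Finset.prod_mul_distrib]
  set P : ℂ := ∏ j ∈ Finset.range d, (ω^j*a) with hPdef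
  have hPne : P ≠ 0 := Finset.prod_ne_zero_iff.mpr fun j _ => mul_ne_zero (pow_ne_zero _ hωne) hane
  have h1 : ∏ j ∈ Finset.range d, (z - ω^j*a) = z^d - a^d := prod_linear d hd ω a hω z
  have h2 : ∏ j ∈ Finset.range d, (z * (ω^j*a) - 1) = P * (z^d - (a⁻¹)^d) := by
    have hfac2 : ∀ j ∈ Finset.range d, z * (ω^j*a) - 1 = (ω^j*a) * (z - (ω⁻¹)^j*a⁻¹) := by
      intro j _
      have hne : (ω^j*a) ≠ 0 := mul_ne_zero (pow_ne_zero _ hωne) hane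
      rw [inv_pow, ← mul_inv]
      field_simp
    rw [Finset.prod_congr rfl hfac2, Finset.prod_mul_distrib, ← hPdef,
      prod_linear d hd ω⁻¹ a⁻¹ hω.inv z]
  have h3 : ∏ j ∈ Finset.range d, (2 * z * (ω^j*a)) = 2^d * z^d * P := by
    rw [Finset.prod_mul_distrib, Finset.prod_const, Finset.card_range, mul_pow]
  rw [h1, h2, h3]
  -- now express powers as exps
  have hzd : z^d = Complex.exp (((d:ℝ)*φ : ℝ) * Complex.I) := by
    have := wj_pow_d d φ hd 0
    rw [wj] at this
    simpa using this
  have had : a^d = Complex.exp (((d:ℝ)*β : ℝ) * Complex.I) := by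
    have := wj_pow_d d β hd 0
    rw [wj] at this
    simpa using this
  have hZne : z^d ≠ 0 := pow_ne_zero _ hzne
  have hAne : a^d ≠ 0 := pow_ne_zero _ hane
  have hainv : (a⁻¹)^d = (a^d)⁻¹ := by rw [inv_pow]
  rw [hainv]
  rw [cos_as_exp ((d:ℝ)*φ), cos_as_exp ((d:ℝ)*β), ← hzd, ← had]
  have h2d : (2:ℂ)^d = 2 * 2^(d-1) := by
    conv_lhs => rw [show d = (d-1)+1 by omega]
    rw [pow_succ]
    ring
  rw [h2d]
  have h2ne : ((2:ℂ))^(d-1) ≠ 0 := by norm_num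
  have hofr2 : ((2:ℝ):ℂ) = (2:ℂ) := by norm_num
  rw [hofr2]
  have key : ∀ (Z A P C : ℂ), Z ≠ 0 → A ≠ 0 → P ≠ 0 → C ≠ 0 →
      (Z - A) * (P * (Z - A⁻¹)) / (2 * C * Z * P) = ((Z + Z⁻¹)/2 - (A + A⁻¹)/2) / C := by
    intro Z A P C hZ hA hP hC
    have hZZ : Z * Z⁻¹ = 1 := mul_inv_cancel₀ hZ
    have hAA : A * A⁻¹ = 1 := mul_inv_cancel₀ hA
    have hD1 : (2:ℂ) * C * Z * P ≠ 0 :=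
      mul_ne_zero (mul_ne_zero (mul_ne_zero two_ne_zero hC) hZ) hP
    rw [div_eq_div_iff hD1 hC]
    linear_combination (C*P)*hAA - (C*P)*hZZ
  exact key (z^d) (a^d) P (2^(d-1)) hZne hAne hPne h2ne
end Main

lemma prod_node_eval (d : ℕ) (β : ℝ) (hd : 1 ≤ d) (k : ℕ) (hk : k < d)
    (hsθ : Real.sin (β + 2*(k:ℝ)*π/d) ≠ 0) :
    ∏ j ∈ (Finset.range d).erase k,
        (Real.cos (β + 2*(k:ℝ)*π/d) - Real.cos (β + 2*(j:ℝ)*π/d))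
      = (d:ℝ) * Real.sin ((d:ℝ)*β) / (2^(d-1) * Real.sin (β + 2*(k:ℝ)*π/d)) := by
  have hd0 : d ≠ 0 := by omega
  have hω : IsPrimitiveRoot (Complex.exp (2*π*Complex.I/d)) d :=
    Complex.isPrimitiveRoot_exp d hd0
  set ω : ℂ := Complex.exp (2*π*Complex.I/d) with hωdef
  set a : ℂ := Complex.exp ((β:ℝ) * Complex.I) with hadef
  have hane : a ≠ 0 := Complex.exp_ne_zero _
  have hωne : ω ≠ 0 := Complex.exp_ne_zero _
  have hwj : ∀ j : ℕ, Complex.exp (((β + 2*(j:ℝ)*π/d : ℝ):ℂ) * Complex.I) = ω^j*a := by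
    intro j
    have h := wj_eq d β hd j
    rw [wj] at h
    exact h
  set z : ℂ := ω^k*a with hzdef
  have hzne : z ≠ 0 := mul_ne_zero (pow_ne_zero _ hωne) hane
  have hzexp : Complex.exp (((β + 2*(k:ℝ)*π/d : ℝ):ℂ) * Complex.I) = z := hwj k
  -- sin θ_k as complex
  set T : ℂ := ((Real.sin (β + 2*(k:ℝ)*π/d) : ℝ) : ℂ) with hTdef
  have hTne : T ≠ 0 := Complex.ofReal_ne_zero.mpr hsθ
  have hzz : z - z⁻¹ = 2 * Complex.I * T := by
    rw [← hzexp]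
    exact sin_as_exp _
  have hzzne : z - z⁻¹ ≠ 0 := by
    rw [hzz]
    exact mul_ne_zero (mul_ne_zero two_ne_zero Complex.I_ne_zero) hTne
  -- sin dβ as complex
  set S : ℂ := ((Real.sin ((d:ℝ)*β) : ℝ) : ℂ) with hSdef
  have hzd : z ^ d = Complex.exp (((d:ℝ)*β : ℝ) * Complex.I) := by
    rw [hzdef, ← hwj k, ← wj]
    exact wj_pow_d d β hd k
  have had : a ^ d = Complex.exp (((d:ℝ)*β : ℝ) * Complex.I) := by
    have h := wj_pow_d d β hd 0
    rw [wj] at h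
    simpa using h
  have hZS : z ^ d - (a⁻¹)^d = 2 * Complex.I * S := by
    rw [inv_pow, had, hzd]
    exact sin_as_exp ((d:ℝ)*β)
  have hkmem : k ∈ Finset.range d := Finset.mem_range.mpr hk
  -- cast goal to ℂ
  apply Complex.ofReal_injective
  rw [Complex.ofReal_prod, Complex.ofReal_div, Complex.ofReal_mul, Complex.ofReal_mul,
    Complex.ofReal_pow]
  simp only [Complex.ofReal_sub]
  have hfac : ∀ j ∈ (Finset.range d).erase k,
      ((Real.cos (β + 2*(k:ℝ)*π/d) : ℝ):ℂ) - ((Real.cos (β + 2*(j:ℝ)*π/d) : ℝ):ℂ)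
        = (z - ω^j*a) * (z * (ω^j*a) - 1) / (2 * z * (ω^j*a)) := by
    intro j _
    rw [cos_as_exp, cos_as_exp, hwj j, hwj k]
    exact factor_ident z (ω^j*a) hzne (mul_ne_zero (pow_ne_zero _ hωne) hane)
  rw [Finset.prod_congr rfl hfac, Finset.prod_div_distrib, Finset.prod_mul_distrib]
  set P : ℂ := ∏ j ∈ (Finset.range d).erase k, (ω^j*a) with hPdef
  have hPne : P ≠ 0 := Finset.prod_ne_zero_iff.mpr fun j _ => mul_ne_zero (pow_ne_zero _ hωne) hane
  have h1 : ∏ j ∈ (Finset.range d).erase k, (z - ω^j*a) = d * z^(d-1) :=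
    prod_linear_erase d hd ω a hω k hk
  have h2 : ∏ j ∈ (Finset.range d).erase k, (z * (ω^j*a) - 1)
      = P * ((2 * Complex.I * S) / (2 * Complex.I * T)) := by
    have hfac2 : ∀ j ∈ (Finset.range d).erase k,
        z * (ω^j*a) - 1 = (ω^j*a) * (z - (ω⁻¹)^j*a⁻¹) := by
      intro j _
      have hne : (ω^j*a) ≠ 0 := mul_ne_zero (pow_ne_zero _ hωne) hane
      rw [inv_pow, ← mul_inv]
      field_simp
    rw [Finset.prod_congr rfl hfac2, Finset.prod_mul_distrib, ← hPdef]
    congr 1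
    -- ∏_{j≠k} (z - (ω⁻¹)^j a⁻¹) = (2IS)/(2IT)
    have hall : ∏ j ∈ Finset.range d, (z - (ω⁻¹)^j*a⁻¹) = z^d - (a⁻¹)^d :=
      prod_linear d hd ω⁻¹ a⁻¹ hω.inv z
    have hinvk : (ω⁻¹)^k*a⁻¹ = z⁻¹ := by rw [hzdef, mul_inv, inv_pow]
    have hsplit : (∏ x ∈ (Finset.range d).erase k, (z - (ω⁻¹)^x*a⁻¹)) * (z - (ω⁻¹)^k*a⁻¹)
        = ∏ x ∈ Finset.range d, (z - (ω⁻¹)^x*a⁻¹) :=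
      Finset.prod_erase_mul (Finset.range d) (fun j => z - (ω⁻¹)^j*a⁻¹) hkmem
    rw [hinvk, hall, hZS] at hsplit
    rw [← hzz, eq_div_iff hzzne]
    exact hsplit
  have h3 : ∏ j ∈ (Finset.range d).erase k, (2 * z * (ω^j*a)) = 2^(d-1) * z^(d-1) * P := by
    rw [Finset.prod_mul_distrib, Finset.prod_const, Finset.card_erase_of_mem hkmem,
      Finset.card_range, mul_pow]
  rw [h1, h2, h3]
  have hzpne : z^(d-1) ≠ 0 := pow_ne_zero _ hzne
  have h2ne : ((2:ℂ))^(d-1) ≠ 0 := by norm_num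
  have hofr2 : ((2:ℝ):ℂ) = (2:ℂ) := by norm_num
  rw [hofr2, show (((d:ℝ):ℂ)) = (d:ℂ) from by push_cast; ring]
  -- final algebra
  have hTT : T * T⁻¹ = 1 := mul_inv_cancel₀ hTne
  have hD1 : (2:ℂ)^(d-1) * z^(d-1) * P ≠ 0 := mul_ne_zero (mul_ne_zero h2ne hzpne) hPne
  have hD2 : (2:ℂ)^(d-1) * T ≠ 0 := mul_ne_zero h2ne hTne
  rw [div_eq_div_iff hD1 hD2]
  have hII : (2:ℂ) * Complex.I ≠ 0 := mul_ne_zero two_ne_zero Complex.I_ne_zero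
  have hST : (2 * Complex.I * S) / (2 * Complex.I * T) = S / T := by
    rw [mul_div_mul_left _ _ hII]
  rw [hST]
  -- goal: (d * z^(d-1)) * (P * (S/T)) * (2^(d-1) * T) = d * S * (2^(d-1) * z^(d-1) * P)
  linear_combination ((d:ℂ) * z^(d-1) * P * 2^(d-1) * S) * hTT

lemma termBound (d : ℕ) (hd : 1 ≤ d) (u v : ℝ) (hu : Real.sin u ≠ 0) (hv : Real.sin v ≠ 0) :
    |Real.cos ((d:ℝ)*(u+v)) - Real.cos ((d:ℝ)*(u-v))| * |Real.sin (u-v)|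
      / ((d:ℝ) * |Real.cos (u+v) - Real.cos (u-v)|)
    ≤ (1/(d:ℝ)) * (|Real.sin ((d:ℝ)*v)|/|Real.sin v| + |Real.sin ((d:ℝ)*u)|/|Real.sin u|) := by
  have hd0 : (0:ℝ) < d := by exact_mod_cast hd
  have e1 : Real.cos ((d:ℝ)*(u+v)) - Real.cos ((d:ℝ)*(u-v))
      = -2 * Real.sin ((d:ℝ)*u) * Real.sin ((d:ℝ)*v) := by
    rw [Real.cos_sub_cos]
    have a1 : ((d:ℝ)*(u+v) + (d:ℝ)*(u-v))/2 = (d:ℝ)*u := by ring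
    have a2 : ((d:ℝ)*(u+v) - (d:ℝ)*(u-v))/2 = (d:ℝ)*v := by ring
    rw [a1, a2]
  have e2 : Real.cos (u+v) - Real.cos (u-v) = -2 * Real.sin u * Real.sin v := by
    rw [Real.cos_sub_cos]
    have a1 : ((u+v) + (u-v))/2 = u := by ring
    have a2 : ((u+v) - (u-v))/2 = v := by ring
    rw [a1, a2]
  rw [e1, e2]
  set p := |Real.sin ((d:ℝ)*u)| with hp
  set q := |Real.sin ((d:ℝ)*v)| with hq
  set su := |Real.sin u| with hsu
  set sv := |Real.sin v| with hsv
  have hsup : 0 < su := abs_pos.mpr hu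
  have hsvp : 0 < sv := abs_pos.mpr hv
  have hp0 : 0 ≤ p := abs_nonneg _
  have hq0 : 0 ≤ q := abs_nonneg _
  have hp1 : p ≤ 1 := Real.abs_sin_le_one _
  have hq1 : q ≤ 1 := Real.abs_sin_le_one _
  have habs1 : |(-2 : ℝ) * Real.sin ((d:ℝ)*u) * Real.sin ((d:ℝ)*v)| = 2 * p * q := by
    rw [abs_mul, abs_mul]
    norm_num
    rfl
  have habs2 : |(-2 : ℝ) * Real.sin u * Real.sin v| = 2 * su * sv := by
    rw [abs_mul, abs_mul]
    norm_num
    rfl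
  rw [habs1, habs2]
  set C := |Real.sin (u-v)| with hC
  have hC0 : 0 ≤ C := abs_nonneg _
  have hCle : C ≤ su + sv := by
    rw [hC, Real.sin_sub]
    calc |Real.sin u * Real.cos v - Real.cos u * Real.sin v|
        ≤ |Real.sin u * Real.cos v| + |Real.cos u * Real.sin v| := abs_sub _ _
      _ ≤ su * 1 + 1 * sv := by
          rw [abs_mul, abs_mul]
          gcongr <;> [exact Real.abs_cos_le_one _; exact Real.abs_cos_le_one _]
      _ = su + sv := by ring
  have hRHS : (1/(d:ℝ)) * (q/sv + p/su) = (q*su + p*sv)/((d:ℝ)*(su*sv)) := by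
    rw [div_add_div _ _ (ne_of_gt hsvp) (ne_of_gt hsup), div_mul_eq_mul_div, one_mul, div_div]
    ring_nf
  rw [hRHS]
  have hD1 : (0:ℝ) < (d:ℝ) * (2 * su * sv) := by positivity
  have hD2 : (0:ℝ) < (d:ℝ) * (su * sv) := by positivity
  rw [div_le_div_iff₀ hD1 hD2]
  have h4 : p*q*C ≤ q*su + p*sv := by
    nlinarith [mul_nonneg (mul_nonneg hp0 hq0) (sub_nonneg.mpr hCle),
      mul_nonneg (mul_nonneg (sub_nonneg.mpr hp1) hq0) hsup.le,
      mul_nonneg (mul_nonneg (sub_nonneg.mpr hq1) hp0) hsvp.le]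
  nlinarith [mul_le_mul_of_nonneg_left h4 (by positivity : (0:ℝ) ≤ 2*(d:ℝ)*(d:ℝ)*su*sv),
    mul_pos hsup hsvp]

lemma nodes_inj (d : ℕ) (hd : 1 ≤ d) (β : ℝ) (hs : Real.sin ((d:ℝ)*β) ≠ 0) :
    ∀ j ∈ Finset.range d, ∀ k ∈ Finset.range d,
      Real.cos (β + 2*(j:ℝ)*π/d) = Real.cos (β + 2*(k:ℝ)*π/d) → j = k := by
  intro j hj k hk hjk
  by_contra hne
  have hkd := Finset.mem_range.mp hk
  have hsθ := sin_theta_ne d β hd hs k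
  have hD := prod_node_eval d β hd k hkd hsθ
  have hzero : ∏ i ∈ (Finset.range d).erase k,
      (Real.cos (β + 2*(k:ℝ)*π/d) - Real.cos (β + 2*(i:ℝ)*π/d)) = 0 :=
    Finset.prod_eq_zero (Finset.mem_erase.mpr ⟨hne, hj⟩) (by rw [hjk, sub_self])
  rw [hzero] at hD
  have hd0 : (d:ℝ) ≠ 0 := by positivity
  have h2 : ((2:ℝ))^(d-1) ≠ 0 := by norm_num
  exact (div_ne_zero (mul_ne_zero hd0 hs) (mul_ne_zero h2 hsθ)) hD.symm

lemma erase_image (d : ℕ) (hd : 1 ≤ d) (β : ℝ) (hs : Real.sin ((d:ℝ)*β) ≠ 0) (k : ℕ)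
    (hk : k < d) :
    (modCheb d β).erase (Real.cos (β + 2*(k:ℝ)*π/d))
      = ((Finset.range d).erase k).image (fun j : ℕ => Real.cos (β + 2*(j:ℝ)*π/d)) := by
  have hinj := nodes_inj d hd β hs
  ext y
  simp only [Finset.mem_erase, modCheb, Finset.mem_image, Finset.mem_range]
  constructor
  · rintro ⟨hy, j, hjd, rfl⟩
    exact ⟨j, ⟨fun h => hy (by rw [h]), hjd⟩, rfl⟩
  · rintro ⟨j, ⟨hjk, hjd⟩, rfl⟩
    refine ⟨fun h => hjk ?_, j, hjd, rfl⟩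
    exact hinj j (Finset.mem_range.mpr hjd) k (Finset.mem_range.mpr hk) h

lemma keyl (W t N c e : ℝ) (hc : c ≠ 0) (he : e ≠ 0) (hN : N ≠ 0) (ht : t ≠ 0) :
    ((W/c)/e)/(N/(c*t)) = W*t/(e*N) := by
  field_simp

lemma lag_eq (d : ℕ) (hd : 1 ≤ d) (β : ℝ) (hs : Real.sin ((d:ℝ)*β) ≠ 0) (x φ : ℝ)
    (hφ : Real.cos φ = x) (k : ℕ) (hk : k < d)
    (hxne : ∀ j ∈ Finset.range d, x ≠ Real.cos (β + 2*(j:ℝ)*π/d)) :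
    lagBasis (modCheb d β) (Real.cos (β + 2*(k:ℝ)*π/d)) x
      = (Real.cos ((d:ℝ)*φ) - Real.cos ((d:ℝ)*β)) * Real.sin (β + 2*(k:ℝ)*π/d)
        / ((x - Real.cos (β + 2*(k:ℝ)*π/d)) * ((d:ℝ) * Real.sin ((d:ℝ)*β))) := by
  have hinj := nodes_inj d hd β hs
  have hsθ := sin_theta_ne d β hd hs k
  have hkmem : k ∈ Finset.range d := Finset.mem_range.mpr hk
  have hxa : x - Real.cos (β + 2*(k:ℝ)*π/d) ≠ 0 := sub_ne_zero.mpr (hxne k hkmem)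
  rw [lagBasis, erase_image d hd β hs k hk]
  rw [Finset.prod_image (fun a ha b hb hab =>
    hinj a (Finset.mem_of_mem_erase ha) b (Finset.mem_of_mem_erase hb) hab)]
  rw [Finset.prod_div_distrib]
  -- numerator
  have hnum : ∏ j ∈ (Finset.range d).erase k, (x - Real.cos (β + 2*(j:ℝ)*π/d))
      = ((Real.cos ((d:ℝ)*φ) - Real.cos ((d:ℝ)*β)) / 2^(d-1))
        / (x - Real.cos (β + 2*(k:ℝ)*π/d)) := by
    rw [eq_div_iff hxa]
    have h := Finset.prod_erase_mul (Finset.range d)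
      (fun j => x - Real.cos (β + 2*(j:ℝ)*π/d)) hkmem
    rw [h, ← hφ, prod_cos_eval d β hd φ]
  rw [hnum, prod_node_eval d β hd k hk hsθ]
  exact keyl _ _ _ _ _ (by norm_num) hxa (mul_ne_zero (by positivity) hs) hsθ

lemma perTerm (d : ℕ) (hd : 1 ≤ d) (β φ : ℝ) (hs : Real.sin ((d:ℝ)*β) ≠ 0) (k : ℕ)
    (hk : k < d) (hne : Real.cos φ - Real.cos (β + 2*(k:ℝ)*π/d) ≠ 0) :
    |Real.cos ((d:ℝ)*φ) - Real.cos ((d:ℝ)*β)| * |Real.sin (β + 2*(k:ℝ)*π/d)|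
      / (|Real.cos φ - Real.cos (β + 2*(k:ℝ)*π/d)| * ((d:ℝ) * |Real.sin ((d:ℝ)*β)|))
    ≤ (1/((d:ℝ) * |Real.sin ((d:ℝ)*β)|)) *
      (|Real.sin ((d:ℝ)*((β-φ)/2))|/|Real.sin ((β-φ)/2 + k*π/d)|
        + |Real.sin ((d:ℝ)*((φ+β)/2))|/|Real.sin ((φ+β)/2 + k*π/d)|) := by
  have hd0 : (0:ℝ) < d := by exact_mod_cast hd
  have hπ := Real.pi_pos
  set θ : ℝ := β + 2*(k:ℝ)*π/d with hθdef
  set u : ℝ := (φ + θ)/2 with hudef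
  set v : ℝ := (φ - θ)/2 with hvdef
  have huv1 : u + v = φ := by rw [hudef, hvdef]; ring
  have huv2 : u - v = θ := by rw [hudef, hvdef]; ring
  -- sin u, sin v ≠ 0
  have hcosdiff : Real.cos φ - Real.cos θ = -2 * Real.sin u * Real.sin v := by
    rw [Real.cos_sub_cos φ θ, ← hudef, ← hvdef]
  have hprod : Real.sin u * Real.sin v ≠ 0 := by
    intro h
    apply hne
    rw [hcosdiff]
    rw [mul_assoc, h, mul_zero]
  have hu : Real.sin u ≠ 0 := fun h => hprod (by rw [h, zero_mul])
  have hv : Real.sin v ≠ 0 := fun h => hprod (by rw [h, mul_zero])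
  have hT := termBound d hd u v hu hv
  rw [huv1, huv2] at hT
  -- cos (d θ) = cos (d β)
  have hcosd : Real.cos ((d:ℝ)*θ) = Real.cos ((d:ℝ)*β) := by
    have harg : (d:ℝ)*θ = (d:ℝ)*β + (k:ℤ)*(2*π) := by
      rw [hθdef]
      push_cast
      field_simp
    rw [harg, Real.cos_add_int_mul_two_pi]
  rw [hcosd] at hT
  -- |sin v| and |sin (d v)| rewrites
  have hvval : v = -((β-φ)/2 + (k:ℝ)*π/d) := by rw [hvdef, hθdef]; ring
  have habs_v : |Real.sin v| = |Real.sin ((β-φ)/2 + (k:ℝ)*π/d)| := by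
    rw [hvval, Real.sin_neg, abs_neg]
  have habs_dv : |Real.sin ((d:ℝ)*v)| = |Real.sin ((d:ℝ)*((β-φ)/2))| := by
    have harg : (d:ℝ)*v = -((d:ℝ)*((β-φ)/2) + (k:ℤ)*π) := by
      rw [hvval]
      push_cast
      field_simp
    rw [harg, Real.sin_neg, abs_neg, abs_sin_add_int_mul_pi]
  have huval : u = (φ+β)/2 + (k:ℝ)*π/d := by rw [hudef, hθdef]; ring
  have habs_u : |Real.sin u| = |Real.sin ((φ+β)/2 + (k:ℝ)*π/d)| := by rw [huval]
  have habs_du : |Real.sin ((d:ℝ)*u)| = |Real.sin ((d:ℝ)*((φ+β)/2))| := by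
    have harg : (d:ℝ)*u = (d:ℝ)*((φ+β)/2) + (k:ℤ)*π := by
      rw [huval]
      push_cast
      field_simp
    rw [harg, abs_sin_add_int_mul_pi]
  rw [habs_v, habs_dv, habs_u, habs_du] at hT
  -- divide by |s|
  have hsabs : (0:ℝ) < |Real.sin ((d:ℝ)*β)| := abs_pos.mpr hs
  have hfin := mul_le_mul_of_nonneg_right hT (le_of_lt (one_div_pos.mpr hsabs))
  calc |Real.cos ((d:ℝ)*φ) - Real.cos ((d:ℝ)*β)| * |Real.sin θ|
      / (|Real.cos φ - Real.cos θ| * ((d:ℝ) * |Real.sin ((d:ℝ)*β)|))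
      = (|Real.cos ((d:ℝ)*φ) - Real.cos ((d:ℝ)*β)| * |Real.sin θ|
          / ((d:ℝ) * |Real.cos φ - Real.cos θ|)) * (1/|Real.sin ((d:ℝ)*β)|) := by
        ring
    _ ≤ ((1/(d:ℝ)) * (|Real.sin ((d:ℝ)*((β-φ)/2))|/|Real.sin ((β-φ)/2 + (k:ℝ)*π/d)|
          + |Real.sin ((d:ℝ)*((φ+β)/2))|/|Real.sin ((φ+β)/2 + (k:ℝ)*π/d)|))
          * (1/|Real.sin ((d:ℝ)*β)|) := hfin
    _ = (1/((d:ℝ) * |Real.sin ((d:ℝ)*β)|)) *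
      (|Real.sin ((d:ℝ)*((β-φ)/2))|/|Real.sin ((β-φ)/2 + (k:ℝ)*π/d)|
        + |Real.sin ((d:ℝ)*((φ+β)/2))|/|Real.sin ((φ+β)/2 + (k:ℝ)*π/d)|) := by
        ring

theorem leb_modCheb_bound :
    ∃ M : ℝ, ∀ d : ℕ, 1 ≤ d → ∀ β : ℝ, Real.sin (d * β) ≠ 0 →
      leb (modCheb d β) ≤ M * Real.log (d + 1) / |Real.sin (d * β)| := by
  refine ⟨16, ?_⟩
  intro d hd β hs
  have hd0 : (0:ℝ) < d := by exact_mod_cast hd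
  have hd1 : (1:ℝ) ≤ (d:ℝ) := by exact_mod_cast hd
  have hπ := Real.pi_pos
  have hsabs : (0:ℝ) < |Real.sin ((d:ℝ)*β)| := abs_pos.mpr hs
  have hs1 : |Real.sin ((d:ℝ)*β)| ≤ 1 := Real.abs_sin_le_one _
  have hlog2 : (0.6931471803:ℝ) < Real.log 2 := Real.log_two_gt_d9
  have hlogmono : Real.log 2 ≤ Real.log ((d:ℝ)+1) := Real.log_le_log (by norm_num) (by linarith)
  have hB0 : (0:ℝ) ≤ 16 * Real.log ((d:ℝ)+1) / |Real.sin ((d:ℝ)*β)| := by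
    apply div_nonneg _ (le_of_lt hsabs)
    nlinarith
  rw [leb]
  refine Real.iSup_le (fun x => Real.iSup_le (fun hx => ?_) hB0) hB0
  by_cases hnode : x ∈ modCheb d β
  · -- x is a node : Lebesgue function equals 1
    have hsum : ∑ a ∈ modCheb d β, |lagBasis (modCheb d β) a x| = 1 := by
      have hcongr : ∀ a ∈ modCheb d β,
          |lagBasis (modCheb d β) a x| = if a = x then 1 else 0 := by
        intro a ha
        by_cases hax : a = x
        · rw [if_pos hax, hax]
          have h1 : lagBasis (modCheb d β) x x = 1 := by
            rw [lagBasis]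
            apply Finset.prod_eq_one
            intro b hb
            have hbx : b ≠ x := (Finset.mem_erase.mp hb).1
            rw [div_self (sub_ne_zero.mpr (Ne.symm hbx))]
          rw [h1]
          exact abs_one
        · rw [if_neg hax, lagBasis, abs_eq_zero]
          have hxmem : x ∈ (modCheb d β).erase a :=
            Finset.mem_erase.mpr ⟨fun h => hax h.symm, hnode⟩
          apply Finset.prod_eq_zero hxmem
          rw [sub_self, zero_div]
      rw [Finset.sum_congr rfl hcongr, Finset.sum_ite_eq' (modCheb d β) x (fun _ => (1:ℝ))]
      rw [if_pos hnode]
    rw [hsum, le_div_iff₀ hsabs]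
    nlinarith
  · -- x is not a node
    have hx' : x ∈ Set.Icc (-1:ℝ) 1 := hx
    set φ : ℝ := Real.arccos x with hφdef
    have hφ : Real.cos φ = x := Real.cos_arccos hx'.1 hx'.2
    have hinj := nodes_inj d hd β hs
    have hsum : ∑ a ∈ modCheb d β, |lagBasis (modCheb d β) a x|
        = ∑ k ∈ Finset.range d, |lagBasis (modCheb d β) (Real.cos (β + 2*(k:ℝ)*π/d)) x| :=
      Finset.sum_image hinj
    rw [hsum]
    have hxne : ∀ j ∈ Finset.range d, x ≠ Real.cos (β + 2*(j:ℝ)*π/d) := by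
      intro j hj h
      exact hnode (by rw [modCheb]; exact Finset.mem_image.mpr ⟨j, hj, h.symm⟩)
    have key : ∀ k ∈ Finset.range d,
        |lagBasis (modCheb d β) (Real.cos (β + 2*(k:ℝ)*π/d)) x|
        ≤ (1/((d:ℝ) * |Real.sin ((d:ℝ)*β)|)) *
          (|Real.sin ((d:ℝ)*((β-φ)/2))|/|Real.sin ((β-φ)/2 + k*π/d)|
            + |Real.sin ((d:ℝ)*((φ+β)/2))|/|Real.sin ((φ+β)/2 + k*π/d)|) := by
      intro k hk
      have hkd := Finset.mem_range.mp hk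
      rw [lag_eq d hd β hs x φ hφ k hkd hxne, ← hφ]
      have habs : |(Real.cos ((d:ℝ)*φ) - Real.cos ((d:ℝ)*β)) * Real.sin (β + 2*(k:ℝ)*π/d)
          / ((Real.cos φ - Real.cos (β + 2*(k:ℝ)*π/d)) * ((d:ℝ) * Real.sin ((d:ℝ)*β)))|
          = |Real.cos ((d:ℝ)*φ) - Real.cos ((d:ℝ)*β)| * |Real.sin (β + 2*(k:ℝ)*π/d)|
          / (|Real.cos φ - Real.cos (β + 2*(k:ℝ)*π/d)| * ((d:ℝ) * |Real.sin ((d:ℝ)*β)|)) := by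
        rw [abs_div, abs_mul, abs_mul, abs_mul, Nat.abs_cast]
      rw [habs]
      apply perTerm d hd β φ hs k hkd
      rw [hφ]
      exact sub_ne_zero.mpr (hxne k hk)
    calc ∑ k ∈ Finset.range d, |lagBasis (modCheb d β) (Real.cos (β + 2*(k:ℝ)*π/d)) x|
        ≤ ∑ k ∈ Finset.range d, (1/((d:ℝ) * |Real.sin ((d:ℝ)*β)|)) *
          (|Real.sin ((d:ℝ)*((β-φ)/2))|/|Real.sin ((β-φ)/2 + k*π/d)|
            + |Real.sin ((d:ℝ)*((φ+β)/2))|/|Real.sin ((φ+β)/2 + k*π/d)|) :=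
          Finset.sum_le_sum key
      _ = (1/((d:ℝ) * |Real.sin ((d:ℝ)*β)|)) *
          ((∑ k ∈ Finset.range d, |Real.sin ((d:ℝ)*((β-φ)/2))|/|Real.sin ((β-φ)/2 + k*π/d)|)
          + ∑ k ∈ Finset.range d, |Real.sin ((d:ℝ)*((φ+β)/2))|/|Real.sin ((φ+β)/2 + k*π/d)|) := by
          rw [← Finset.mul_sum, Finset.sum_add_distrib]
      _ ≤ (1/((d:ℝ) * |Real.sin ((d:ℝ)*β)|)) *
          (8 * d * Real.log ((d:ℝ)+1) + 8 * d * Real.log ((d:ℝ)+1)) := by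
          apply mul_le_mul_of_nonneg_left _ (by positivity)
          exact add_le_add (sumB d hd ((β-φ)/2)) (sumB d hd ((φ+β)/2))
      _ = 16 * Real.log ((d:ℝ)+1) / |Real.sin ((d:ℝ)*β)| := by
          field_simp
          ring
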